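/- arXiv:1811.03350 — 5 statements merged into one kernel-verified Lean document; each statement's English description precedes it below -/
import Mathlib

section
/- Suppose A_{jj} = 0 and A_{jk}A_{ki} = 1 implies A_{ji} = 0 (no Δ-cliques with apex j), and let O_j = {k : A_{jk} = 1} be nonempty. Restrict the system ẋ_m = x_m F_m(x) (with F as in the simplex construction) to the subspace Q_j = {x : x_m = 0 unless m = j or m ∈ O_j}. Define Φ_j by tan Φ_j = x_j² / Σ_{i∈O_j} x_i². Then along solutions in Q_j \ {0}, dΦ_j/dt = −2 x_j² Σ_{i∈O_j} x_i² (η x_i² + ε x_j²) / ([Σ_{i∈O_j} x_i²]² + x_j⁴), which is ≤ 0, and is strictly negative unless x_i = 0 for all i ∈ O_j or x_j = 0. -/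
open Finset Real

/-- On the invariant subspace `Q_j` of the simplex construction (no
1-cycles, 2-cycles or Δ-cliques with apex `j`), the angular function `Φ_j` with
`tan Φ_j = x_j² / Σ_{i∈O_j} x_i²` satisfies
`dΦ_j/dt = −2 x_j² Σ_{i∈O_j} x_i² (η x_i² + ε x_j²) / ([Σ_{i∈O_j} x_i²]² + x_j⁴) ≤ 0`,
with strict negativity unless `x_i = 0` for all `i ∈ O_j` or `x_j = 0`. -/
theorem angular_decrease {n : ℕ} (ε η : ℝ) (hε : 0 < ε) (hε1 : ε < 1) (hη : 0 < η)
    (j : Fin n) (O : Finset (Fin n)) (hO : O.Nonempty) (hjO : j ∉ O)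
    (x : ℝ → Fin n → ℝ)
    (hQ : ∀ t : ℝ, ∀ m : Fin n, m ≠ j → m ∉ O → x t m = 0)
    (hxj : ∀ t : ℝ, HasDerivAt (fun s => x s j)
      (x t j * (1 - (∑ k ∈ O, (η + 1) * (x t k) ^ 2) - (x t j) ^ 2)) t)
    (hxi : ∀ t : ℝ, ∀ i ∈ O, HasDerivAt (fun s => x s i)
      (x t i * (1 + (ε - 1) * (x t j) ^ 2 - (∑ k ∈ O.erase i, (η + 1) * (x t k) ^ 2)
        - (x t i) ^ 2)) t)
    (Φ : ℝ → ℝ) (hΦ : ∀ t, Φ t = arctan ((x t j) ^ 2 / ∑ i ∈ O, (x t i) ^ 2)) :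
    ∀ t : ℝ, (∑ i ∈ O, (x t i) ^ 2) ≠ 0 →
      HasDerivAt Φ
        (-2 * (x t j) ^ 2 * (∑ i ∈ O, (x t i) ^ 2 * (η * (x t i) ^ 2 + ε * (x t j) ^ 2)) /
          ((∑ i ∈ O, (x t i) ^ 2) ^ 2 + (x t j) ^ 4)) t ∧
      (-2 * (x t j) ^ 2 * (∑ i ∈ O, (x t i) ^ 2 * (η * (x t i) ^ 2 + ε * (x t j) ^ 2)) /
          ((∑ i ∈ O, (x t i) ^ 2) ^ 2 + (x t j) ^ 4) ≤ 0) ∧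
      (¬ ((∀ i ∈ O, x t i = 0) ∨ x t j = 0) →
        -2 * (x t j) ^ 2 * (∑ i ∈ O, (x t i) ^ 2 * (η * (x t i) ^ 2 + ε * (x t j) ^ 2)) /
          ((∑ i ∈ O, (x t i) ^ 2) ^ 2 + (x t j) ^ 4) < 0) := by
  intro t hS
  set S : ℝ := ∑ i ∈ O, (x t i) ^ 2 with hSdef
  set P : ℝ := ∑ i ∈ O, (x t i) ^ 4 with hPdef
  set T : ℝ := ∑ k ∈ O, (η + 1) * (x t k) ^ 2 with hTdef
  have hSnn : 0 ≤ S := Finset.sum_nonneg fun i _ => sq_nonneg _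
  have hPnn : 0 ≤ P := Finset.sum_nonneg fun i _ => by positivity
  have hS2 : 0 < S ^ 2 := (sq_nonneg S).lt_of_ne' (pow_ne_zero 2 hS)
  have hden : 0 < S ^ 2 + (x t j) ^ 4 := by nlinarith [sq_nonneg ((x t j) ^ 2)]
  -- numerator sum rewritten
  have hnum : (∑ i ∈ O, (x t i) ^ 2 * (η * (x t i) ^ 2 + ε * (x t j) ^ 2))
      = η * P + ε * (x t j) ^ 2 * S := by
    rw [hPdef, hSdef, Finset.mul_sum, Finset.mul_sum, ← Finset.sum_add_distrib]
    exact Finset.sum_congr rfl fun i _ => by ring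
  -- derivative of u = x_j ^ 2
  have hu : HasDerivAt (fun s => (x s j) ^ 2)
      (2 * (x t j) ^ 2 * (1 - T - (x t j) ^ 2)) t := by
    have := (hxj t).fun_pow 2
    refine this.congr_deriv ?_
    push_cast
    rw [hTdef]
    ring
  -- derivative of v = ∑ x_i ^ 2
  have hv : HasDerivAt (fun s => ∑ i ∈ O, (x s i) ^ 2)
      (2 * ((1 + (ε - 1) * (x t j) ^ 2 - T) * S + η * P)) t := by
    have h1 : HasDerivAt (fun s => ∑ i ∈ O, (x s i) ^ 2)
        (∑ i ∈ O, (2 : ℕ) * (x t i) ^ 1 *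
          (x t i * (1 + (ε - 1) * (x t j) ^ 2 -
            (∑ k ∈ O.erase i, (η + 1) * (x t k) ^ 2) - (x t i) ^ 2))) t :=
      HasDerivAt.fun_sum fun i hi => (hxi t i hi).fun_pow 2
    convert h1 using 1
    have : ∀ i ∈ O, (2 : ℕ) * (x t i) ^ 1 *
          (x t i * (1 + (ε - 1) * (x t j) ^ 2 -
            (∑ k ∈ O.erase i, (η + 1) * (x t k) ^ 2) - (x t i) ^ 2))
        = 2 * (1 + (ε - 1) * (x t j) ^ 2 - T) * (x t i) ^ 2 + 2 * η * (x t i) ^ 4 := by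
      intro i hi
      rw [Finset.sum_erase_eq_sub hi, ← hTdef]
      push_cast
      ring
    rw [Finset.sum_congr rfl this, Finset.sum_add_distrib, ← Finset.mul_sum,
      ← Finset.mul_sum, ← hSdef, ← hPdef]
    ring
  have hdiv : HasDerivAt (fun s => (x s j) ^ 2 / ∑ i ∈ O, (x s i) ^ 2)
      ((2 * (x t j) ^ 2 * (1 - T - (x t j) ^ 2) * S -
        (x t j) ^ 2 * (2 * ((1 + (ε - 1) * (x t j) ^ 2 - T) * S + η * P))) / S ^ 2) t :=
    hu.div hv hS
  have harc := hdiv.arctan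
  have hfun : Φ = fun s => arctan ((x s j) ^ 2 / ∑ i ∈ O, (x s i) ^ 2) := funext hΦ
  have hval : -2 * (x t j) ^ 2 * (∑ i ∈ O, (x t i) ^ 2 * (η * (x t i) ^ 2 + ε * (x t j) ^ 2)) /
        (S ^ 2 + (x t j) ^ 4)
      = 1 / (1 + ((x t j) ^ 2 / S) ^ 2) *
        ((2 * (x t j) ^ 2 * (1 - T - (x t j) ^ 2) * S -
          (x t j) ^ 2 * (2 * ((1 + (ε - 1) * (x t j) ^ 2 - T) * S + η * P))) / S ^ 2) := by
    rw [hnum]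
    have h1 : 1 + ((x t j) ^ 2 / S) ^ 2 = (S ^ 2 + (x t j) ^ 4) / S ^ 2 := by
      field_simp
    rw [h1]
    field_simp
    ring
  refine ⟨?_, ?_, ?_⟩
  · rw [hfun, hval]
    exact harc
  · apply div_nonpos_of_nonpos_of_nonneg _ hden.le
    have : 0 ≤ ∑ i ∈ O, (x t i) ^ 2 * (η * (x t i) ^ 2 + ε * (x t j) ^ 2) :=
      Finset.sum_nonneg fun i _ => by positivity
    nlinarith [sq_nonneg (x t j)]
  · intro h
    push_neg at h
    obtain ⟨⟨i, hi, hxi0⟩, hxj0⟩ := h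
    apply div_neg_of_neg_of_pos _ hden
    have hpos : 0 < ∑ i ∈ O, (x t i) ^ 2 * (η * (x t i) ^ 2 + ε * (x t j) ^ 2) := by
      apply Finset.sum_pos' (fun k _ => by positivity) ⟨i, hi, ?_⟩
      have h1 : 0 < (x t i) ^ 2 := (sq_nonneg _).lt_of_ne' (pow_ne_zero 2 hxi0)
      have h2 : 0 < (x t j) ^ 2 := (sq_nonneg _).lt_of_ne' (pow_ne_zero 2 hxj0)
      positivity
    have h2 : 0 < (x t j) ^ 2 := (sq_nonneg _).lt_of_ne' (pow_ne_zero 2 hxj0)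
    nlinarith
end

section
/- Let O ⊂ {1,...,n} be nonempty and consider the vector field on Ω = {x ∈ ℝ^n : x_k = 0 for k ∉ O} given by ẋ_i = x_i(1 − R − η Σ_{k∈O, k≠i} x_k²) for i ∈ O, where R = Σ_{k∈O} x_k² and η > 0. Define V(x) = −R/2 + R²/4 + (η/4) Σ_{k∈O} x_k² Σ_{l∈O, l≠k} x_l². Then for every i ∈ O and x ∈ Ω, −∂V/∂x_i = x_i(1 − R) − η x_i Σ_{k∈O, k≠i} x_k², i.e., the restricted flow is the negative gradient flow of V. -/
open Finset

lemma sum_mul_sum_erase {n : ℕ} (O : Finset (Fin n)) (u : Fin n → ℝ) :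
    ∑ k ∈ O, u k * ∑ l ∈ O.erase k, u l =
      (∑ k ∈ O, u k) ^ 2 - ∑ k ∈ O, (u k) ^ 2 := by
  have h : ∀ k ∈ O, u k * ∑ l ∈ O.erase k, u l
      = u k * (∑ l ∈ O, u l) - (u k) ^ 2 := by
    intro k hk
    rw [Finset.sum_erase_eq_sub hk]
    ring
  rw [Finset.sum_congr rfl h, Finset.sum_sub_distrib, ← Finset.sum_mul]
  ring

/-- On the coordinate subspace `Ω` indexed by a nonempty `O`, the
vector field `ẋ_i = x_i(1 − R − η Σ_{k≠i} x_k²)` is the negative gradient flow of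
`V(x) = −R/2 + R²/4 + (η/4) Σ_{k∈O} x_k² Σ_{l∈O, l≠k} x_l²`:
`−∂V/∂x_i = x_i(1 − R) − η x_i Σ_{k∈O, k≠i} x_k²` for every `i ∈ O` and `x ∈ Ω`. -/
theorem gradient_flow_on_Omega {n : ℕ} (η : ℝ) (hη : 0 < η)
    (O : Finset (Fin n)) (hO : O.Nonempty)
    (V : (Fin n → ℝ) → ℝ)
    (hV : ∀ x : Fin n → ℝ, V x =
      -(∑ k ∈ O, (x k) ^ 2) / 2 + (∑ k ∈ O, (x k) ^ 2) ^ 2 / 4 +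
        η / 4 * ∑ k ∈ O, (x k) ^ 2 * ∑ l ∈ O.erase k, (x l) ^ 2) :
    ∀ i ∈ O, ∀ x : Fin n → ℝ, (∀ k, k ∉ O → x k = 0) →
      HasDerivAt (fun s : ℝ => V (Function.update x i s))
        (-(x i * (1 - ∑ k ∈ O, (x k) ^ 2) - η * x i * ∑ k ∈ O.erase i, (x k) ^ 2))
        (x i) := by
  intro i hi x _hx
  set A : ℝ := ∑ k ∈ O.erase i, (x k) ^ 2 with hA
  set Q : ℝ := ∑ k ∈ O.erase i, (x k) ^ 4 with hQ
  -- explicit formula for the function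
  have key : (fun s : ℝ => V (Function.update x i s)) =
      fun s : ℝ => -(s ^ 2 + A) / 2 + (s ^ 2 + A) ^ 2 / 4 +
        η / 4 * ((s ^ 2 + A) ^ 2 - (s ^ 4 + Q)) := by
    funext s
    rw [hV]
    have h2 : ∑ k ∈ O, (Function.update x i s k) ^ 2 = s ^ 2 + A := by
      have : ∀ k, (Function.update x i s k) ^ 2
          = Function.update (fun k => (x k) ^ 2) i (s ^ 2) k := by
        intro k
        exact (Function.apply_update (fun _ t => t ^ 2) x i s k)
      simp_rw [this]
      rw [Finset.sum_update_of_mem hi, Finset.sdiff_singleton_eq_erase]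
    have h4 : ∑ k ∈ O, (Function.update x i s k) ^ 4 = s ^ 4 + Q := by
      have : ∀ k, (Function.update x i s k) ^ 4
          = Function.update (fun k => (x k) ^ 4) i (s ^ 4) k := by
        intro k
        exact (Function.apply_update (fun _ t => t ^ 4) x i s k)
      simp_rw [this]
      rw [Finset.sum_update_of_mem hi, Finset.sdiff_singleton_eq_erase]
    have hsq : ∑ k ∈ O, ((Function.update x i s k) ^ 2) ^ 2 = s ^ 4 + Q := by
      simp_rw [← pow_mul]
      exact h4
    rw [sum_mul_sum_erase O (fun k => (Function.update x i s k) ^ 2), h2, hsq]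
  rw [key]
  -- derivative computation
  have hR : ∑ k ∈ O, (x k) ^ 2 = (x i) ^ 2 + A := by
    rw [hA, ← Finset.add_sum_erase O _ hi]
  have h1 : HasDerivAt (fun s : ℝ => s ^ 2 + A) (2 * x i) (x i) := by
    simpa using (hasDerivAt_pow 2 (x i)).add_const A
  have h4 : HasDerivAt (fun s : ℝ => s ^ 4 + Q) (4 * (x i) ^ 3) (x i) := by
    simpa using (hasDerivAt_pow 4 (x i)).add_const Q
  have hD := ((h1.div_const 2).neg.add ((h1.pow 2).div_const 4)).add
      (((h1.pow 2).sub h4).const_mul (η / 4))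
  convert hD using 1
  · rfl
  · rfl
  · funext s; simp only [Pi.add_apply, Pi.neg_apply, Pi.pow_apply, Pi.sub_apply]; ring
  · rw [hR]; push_cast; ring
end

section
/- For the Kirk–Silber realization ẋ₁ = x₁[1−|x|²+ε(x₃²+x₄²)−ηx₂²], ẋ₂ = x₂[1−|x|²+εx₁²−η(x₃²+x₄²)], ẋ₃ = x₃[1−|x|²+εx₂²−η(x₁²+x₄²)], ẋ₄ = x₄[1−|x|²+εx₂²−η(x₁²+x₃²)] with 0 < ε < 1, η > 0, the four unit coordinate vectors e₁, e₂, e₃, e₄ are equilibria, and on the invariant subspace Q₂ = {x₁ = 0}, the function Φ₂ defined by tan Φ₂ = x₂²/(x₃²+x₄²) satisfies dΦ₂/dt = −2x₂² [ε(x₃²+x₄²)x₂² + η(x₃⁴+x₄⁴)] / [x₂⁴ + (x₃²+x₄²)²] ≤ 0, with equality only when x₂ = 0 or x₃ = x₄ = 0. -/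
set_option maxHeartbeats 1600000

open Real

/-- For the Kirk–Silber realization on ℝ⁴ (coordinates `x 0,…,x 3`
standing for `x₁,…,x₄`), the unit coordinate vectors are equilibria, and on the
invariant subspace `Q₂ = {x₁ = 0}` the function `Φ₂` with
`tan Φ₂ = x₂²/(x₃²+x₄²)` satisfies
`dΦ₂/dt = −2x₂²[ε(x₃²+x₄²)x₂² + η(x₃⁴+x₄⁴)]/[x₂⁴+(x₃²+x₄²)²] ≤ 0`,
with equality only when `x₂ = 0` or `x₃ = x₄ = 0`. -/
theorem KS_realization (ε η : ℝ) (hε : 0 < ε) (hε1 : ε < 1) (hη : 0 < η)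
    (f : (Fin 4 → ℝ) → (Fin 4 → ℝ))
    (hf : ∀ x : Fin 4 → ℝ,
      f x 0 = x 0 * (1 - (∑ i, (x i) ^ 2) + ε * ((x 2) ^ 2 + (x 3) ^ 2) - η * (x 1) ^ 2) ∧
      f x 1 = x 1 * (1 - (∑ i, (x i) ^ 2) + ε * (x 0) ^ 2 - η * ((x 2) ^ 2 + (x 3) ^ 2)) ∧
      f x 2 = x 2 * (1 - (∑ i, (x i) ^ 2) + ε * (x 1) ^ 2 - η * ((x 0) ^ 2 + (x 3) ^ 2)) ∧
      f x 3 = x 3 * (1 - (∑ i, (x i) ^ 2) + ε * (x 1) ^ 2 - η * ((x 0) ^ 2 + (x 2) ^ 2))) :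
    (∀ i : Fin 4, f (Pi.single i 1) = 0) ∧
    (∀ x : ℝ → Fin 4 → ℝ,
      (∀ t : ℝ, x t 0 = 0) →
      (∀ t : ℝ, ∀ m : Fin 4, HasDerivAt (fun s => x s m) (f (x t) m) t) →
      ∀ Φ : ℝ → ℝ,
        (∀ t, Φ t = arctan ((x t 1) ^ 2 / ((x t 2) ^ 2 + (x t 3) ^ 2))) →
        ∀ t : ℝ, (x t 2) ^ 2 + (x t 3) ^ 2 ≠ 0 →
          HasDerivAt Φ
            (-2 * (x t 1) ^ 2 *
              (ε * ((x t 2) ^ 2 + (x t 3) ^ 2) * (x t 1) ^ 2 + η * ((x t 2) ^ 4 + (x t 3) ^ 4)) /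
              ((x t 1) ^ 4 + ((x t 2) ^ 2 + (x t 3) ^ 2) ^ 2)) t ∧
          (-2 * (x t 1) ^ 2 *
              (ε * ((x t 2) ^ 2 + (x t 3) ^ 2) * (x t 1) ^ 2 + η * ((x t 2) ^ 4 + (x t 3) ^ 4)) /
              ((x t 1) ^ 4 + ((x t 2) ^ 2 + (x t 3) ^ 2) ^ 2) ≤ 0) ∧
          (-2 * (x t 1) ^ 2 *
              (ε * ((x t 2) ^ 2 + (x t 3) ^ 2) * (x t 1) ^ 2 + η * ((x t 2) ^ 4 + (x t 3) ^ 4)) /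
              ((x t 1) ^ 4 + ((x t 2) ^ 2 + (x t 3) ^ 2) ^ 2) = 0 →
            x t 1 = 0 ∨ (x t 2 = 0 ∧ x t 3 = 0))) := by
  constructor
  · intro i
    funext j
    obtain ⟨h0, h1, h2, h3⟩ := hf (Pi.single i 1)
    fin_cases i <;> fin_cases j <;>
      simp_all [Fin.sum_univ_four, Pi.single_apply] <;> ring
  · intro x hx0 hx Φ hΦ t hv
    set a := x t 1 with ha
    set b := x t 2 with hb
    set c := x t 3 with hc
    have hx0t : x t 0 = 0 := hx0 t
    obtain ⟨f0, f1, f2, f3⟩ := hf (x t)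
    have hS : (∑ i, (x t i) ^ 2) = a ^ 2 + b ^ 2 + c ^ 2 := by
      rw [Fin.sum_univ_four, hx0t]; ring
    have hvpos : 0 < b ^ 2 + c ^ 2 :=
      lt_of_le_of_ne (by positivity) (Ne.symm hv)
    have hden : 0 < a ^ 4 + (b ^ 2 + c ^ 2) ^ 2 := by positivity
    have du : HasDerivAt (fun s => (x s 1) ^ 2) ((2 : ℕ) * a ^ 1 * f (x t) 1) t :=
      (hx t 1).pow 2
    have dv : HasDerivAt (fun s => (x s 2) ^ 2 + (x s 3) ^ 2)
        ((2 : ℕ) * b ^ 1 * f (x t) 2 + (2 : ℕ) * c ^ 1 * f (x t) 3) t :=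
      ((hx t 2).pow 2).add ((hx t 3).pow 2)
    have dg := (du.div dv hv).arctan
    have hΦf : Φ = fun s => arctan ((x s 1) ^ 2 / ((x s 2) ^ 2 + (x s 3) ^ 2)) :=
      funext hΦ
    have key : HasDerivAt Φ
        (-2 * a ^ 2 * (ε * (b ^ 2 + c ^ 2) * a ^ 2 + η * (b ^ 4 + c ^ 4)) /
          (a ^ 4 + (b ^ 2 + c ^ 2) ^ 2)) t := by
      rw [hΦf]
      convert dg using 1
      · rfl
      rw [f1, f2, f3, hS, hx0t]
      simp only [Pi.div_apply, ← ha, ← hb, ← hc]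
      field_simp
      ring
    have hnum : -2 * a ^ 2 * (ε * (b ^ 2 + c ^ 2) * a ^ 2 + η * (b ^ 4 + c ^ 4)) ≤ 0 := by
      have h1 : 0 ≤ ε * (b ^ 2 + c ^ 2) * a ^ 2 + η * (b ^ 4 + c ^ 4) := by positivity
      nlinarith [sq_nonneg a]
    refine ⟨key, div_nonpos_of_nonpos_of_nonneg hnum hden.le, ?_⟩
    intro h
    by_cases hA : a = 0
    · exact Or.inl hA
    · exfalso
      have hnum0 : -2 * a ^ 2 * (ε * (b ^ 2 + c ^ 2) * a ^ 2 + η * (b ^ 4 + c ^ 4)) = 0 := by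
        rcases div_eq_zero_iff.mp h with h' | h'
        · exact h'
        · exact absurd h' hden.ne'
      have ha2 : 0 < a ^ 2 := by positivity
      have hE : 0 < ε * (b ^ 2 + c ^ 2) * a ^ 2 + η * (b ^ 4 + c ^ 4) :=
        add_pos_of_pos_of_nonneg (mul_pos (mul_pos hε hvpos) ha2)
          (mul_nonneg hη.le (by positivity))
      nlinarith [mul_pos ha2 hE]
end

section
/- Let η > 0, let O be a nonempty finite index set, and let V(x) = −R/2 + R²/4 + (η/4) Σ_{k∈O} x_k² Σ_{l∈O, l≠k} x_l², with R = Σ_{k∈O} x_k², be defined on ℝ^O. Then the local minima of V are exactly the points ±e_i, i ∈ O (the points with one coordinate equal to ±1 and all others zero), and V(±e_i) = −1/4. -/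
open Finset

/-- For `η > 0`, the local minima of
`V(x) = −R/2 + R²/4 + (η/4) Σ_k x_k² Σ_{l≠k} x_l²` (with `R = Σ_k x_k²`) on
`ℝ^O` (here `O = Fin n`, `n ≥ 1`) are exactly the points `±e_i`, and
`V(±e_i) = −1/4`. -/
theorem local_minima_of_V {n : ℕ} (hn : 1 ≤ n) (η : ℝ) (hη : 0 < η)
    (V : (Fin n → ℝ) → ℝ)
    (hV : ∀ x : Fin n → ℝ, V x =
      -(∑ k, (x k) ^ 2) / 2 + (∑ k, (x k) ^ 2) ^ 2 / 4 +
        η / 4 * ∑ k, (x k) ^ 2 * ∑ l ∈ Finset.univ.erase k, (x l) ^ 2) :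
    (∀ x : Fin n → ℝ, IsLocalMin V x ↔
      ∃ i : Fin n, (x i = 1 ∨ x i = -1) ∧ ∀ k : Fin n, k ≠ i → x k = 0) ∧
    (∀ i : Fin n, V (Pi.single i 1) = -1/4 ∧ V (Pi.single i (-1)) = -1/4) := by
  -- closed form for V
  have key : ∀ x : Fin n → ℝ, V x =
      -(∑ k, (x k) ^ 2) / 2 + (1 + η) * (∑ k, (x k) ^ 2) ^ 2 / 4
        - η * (∑ k, (x k) ^ 4) / 4 := by
    intro x
    have h2 : ∑ k, (x k) ^ 2 * ∑ l ∈ Finset.univ.erase k, (x l) ^ 2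
        = (∑ k, (x k) ^ 2) ^ 2 - ∑ k, (x k) ^ 4 := by
      have h1 : ∀ k : Fin n, (x k) ^ 2 * ∑ l ∈ Finset.univ.erase k, (x l) ^ 2
          = (x k) ^ 2 * (∑ l, (x l) ^ 2) - (x k) ^ 4 := by
        intro k
        rw [Finset.sum_erase_eq_sub (Finset.mem_univ k)]; ring
      rw [Finset.sum_congr rfl fun k _ => h1 k, Finset.sum_sub_distrib,
        ← Finset.sum_mul]
      ring
    rw [hV x, h2]; ring
  -- sums over a single-coordinate update
  have sum_upd : ∀ (x : Fin n → ℝ) (i : Fin n) (s : ℝ) (m : ℕ),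
      ∑ k, (Function.update x i s k) ^ m = ∑ k, (x k) ^ m - (x i) ^ m + s ^ m := by
    intro x i s m
    have : (fun k => (Function.update x i s k) ^ m)
        = Function.update (fun k => (x k) ^ m) i (s ^ m) := by
      funext k
      rcases eq_or_ne k i with rfl | h
      · simp
      · simp [Function.update_of_ne h]
    rw [this, Finset.sum_update_of_mem (Finset.mem_univ i),
      Finset.sdiff_singleton_eq_erase, Finset.sum_erase_eq_sub (Finset.mem_univ i)]
    ring
  -- global lower bound: V y ≥ -1/4
  have sq_sum_le : ∀ y : Fin n → ℝ, ∑ k, (y k) ^ 4 ≤ (∑ k, (y k) ^ 2) ^ 2 := by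
    intro y
    have h1 : ∀ k ∈ Finset.univ, (y k) ^ 4 ≤ (y k) ^ 2 * ∑ l, (y l) ^ 2 := by
      intro k _
      have hk : (y k) ^ 2 ≤ ∑ l, (y l) ^ 2 :=
        Finset.single_le_sum (fun l _ => sq_nonneg (y l)) (Finset.mem_univ k)
      nlinarith [sq_nonneg (y k)]
    calc ∑ k, (y k) ^ 4 ≤ ∑ k, (y k) ^ 2 * ∑ l, (y l) ^ 2 := Finset.sum_le_sum h1
      _ = (∑ k, (y k) ^ 2) ^ 2 := by rw [← Finset.sum_mul]; ring
  have lower : ∀ y : Fin n → ℝ, -1/4 ≤ V y := by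
    intro y
    rw [key y]
    nlinarith [sq_sum_le y, sq_nonneg ((∑ k, (y k) ^ 2) - 1)]
  -- value at points with one coordinate ±1
  have val : ∀ (x : Fin n → ℝ) (i : Fin n), (x i = 1 ∨ x i = -1) →
      (∀ k : Fin n, k ≠ i → x k = 0) → V x = -1/4 := by
    intro x i hi hk
    have h2 : ∑ k, (x k) ^ 2 = (x i) ^ 2 :=
      Finset.sum_eq_single i (fun k _ hki => by rw [hk k hki]; norm_num)
        (fun h => absurd (Finset.mem_univ i) h)
    have h4 : ∑ k, (x k) ^ 4 = (x i) ^ 4 :=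
      Finset.sum_eq_single i (fun k _ hki => by rw [hk k hki]; norm_num)
        (fun h => absurd (Finset.mem_univ i) h)
    have hx2 : (x i) ^ 2 = 1 := by rcases hi with h | h <;> rw [h] <;> ring
    have hx4 : (x i) ^ 4 = 1 := by nlinarith
    rw [key x, h2, h4, hx2, hx4]
    ring
  constructor
  · intro x
    constructor
    · -- forward: local min → x = ±e_i
      intro hmin
      -- first-order conditions along each coordinate
      have crit : ∀ i : Fin n, x i * ((1 + η) * (∑ k, (x k) ^ 2) - 1 - η * (x i) ^ 2) = 0 := by
        intro i
        set T := ∑ k, (x k) ^ 2 with hT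
        set F := ∑ k, (x k) ^ 4 with hF
        set a := x i with ha
        have hco : ContinuousAt (fun s : ℝ => Function.update x i s) a := by
          exact (Continuous.update continuous_const i continuous_id).continuousAt
        have hmin' : IsLocalMin (V ∘ fun s : ℝ => Function.update x i s) a := by
          have : Function.update x i a = x := Function.update_eq_self i x
          exact (this ▸ hmin).comp_continuous hco
        have heq : (V ∘ fun s : ℝ => Function.update x i s)
            = fun s => -(T - a ^ 2 + s ^ 2) / 2 + (1 + η) * (T - a ^ 2 + s ^ 2) ^ 2 / 4
              - η * (F - a ^ 4 + s ^ 4) / 4 := by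
          funext s
          simp only [Function.comp_apply, key, sum_upd]
          rfl
        rw [heq] at hmin'
        have hd : HasDerivAt
            (fun s : ℝ => -(T - a ^ 2 + s ^ 2) / 2 + (1 + η) * (T - a ^ 2 + s ^ 2) ^ 2 / 4
              - η * (F - a ^ 4 + s ^ 4) / 4)
            (a * ((1 + η) * T - 1 - η * a ^ 2)) a := by
          have h1 : HasDerivAt (fun s : ℝ => s ^ 2) (2 * a) a := by
            simpa using hasDerivAt_pow 2 a
          have h4 : HasDerivAt (fun s : ℝ => s ^ 4) (4 * a ^ 3) a := by
            simpa using hasDerivAt_pow 4 a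
          have hq : HasDerivAt (fun s : ℝ => T - a ^ 2 + s ^ 2) (2 * a) a :=
            h1.const_add _
          have hq2 : HasDerivAt (fun s : ℝ => (T - a ^ 2 + s ^ 2) ^ 2)
              (2 * (T - a ^ 2 + a ^ 2) ^ 1 * (2 * a)) a := hq.pow 2
          have hf : HasDerivAt (fun s : ℝ => F - a ^ 4 + s ^ 4) (4 * a ^ 3) a :=
            h4.const_add _
          have := ((hq.neg.div_const 2).add ((hq2.const_mul (1 + η)).div_const 4)).sub
            ((hf.const_mul η).div_const 4)
          exact this.congr_deriv (by ring)
        have := hmin'.hasDerivAt_eq_zero hd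
        linarith [this]
      set T := ∑ k, (x k) ^ 2 with hT
      -- x ≠ 0
      by_cases hex : ∃ i : Fin n, x i ≠ 0
      · obtain ⟨i, hi⟩ := hex
        have hci : η * (x i) ^ 2 = (1 + η) * T - 1 := by
          rcases mul_eq_zero.mp (crit i) with h | h
          · exact absurd h hi
          · linarith
        by_cases hall : ∀ k : Fin n, k ≠ i → x k = 0
        · -- single nonzero coordinate
          refine ⟨i, ?_, hall⟩
          have hTa : T = (x i) ^ 2 := by
            rw [hT]
            refine Finset.sum_eq_single i (fun k _ hki => by rw [hall k hki]; ring)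
              (fun h => absurd (Finset.mem_univ i) h)
          have : (x i) ^ 2 = 1 := by
            rw [hTa] at hci; nlinarith
          have hfac : (x i - 1) * (x i + 1) = 0 := by nlinarith
          rcases mul_eq_zero.mp hfac with h | h
          · exact Or.inl (by linarith)
          · exact Or.inr (by linarith)
        · -- at least two nonzero coordinates: contradiction
          push_neg at hall
          obtain ⟨j, hji, hj⟩ := hall
          exfalso
          have hcj : η * (x j) ^ 2 = (1 + η) * T - 1 := by
            rcases mul_eq_zero.mp (crit j) with h | h
            · exact absurd h hj
            · linarith
          set a := x i with ha
          set b := x j with hb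
          have htb : b ^ 2 = a ^ 2 := by
            have h : η * b ^ 2 = η * a ^ 2 := by linarith
            exact mul_left_cancel₀ (ne_of_gt hη) h
          have ht0 : 0 < a ^ 2 := by positivity
          have hTt : (1 + η) * T = 1 + η * a ^ 2 := by linarith
          -- the 2D rotation curve
          set c : ℝ → (Fin n → ℝ) :=
            fun s => Function.update (Function.update x i (a + s * b)) j (b - s * a) with hc
          have hc0 : c 0 = x := by
            simp [hc, ha, hb, Function.update_eq_self]
          have hcc : ContinuousAt c 0 := by
            apply Continuous.continuousAt
            apply Continuous.update
            · exact Continuous.update continuous_const i (by fun_prop)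
            · fun_prop
          have hmin' : IsLocalMin (V ∘ c) 0 := (hc0 ▸ hmin).comp_continuous hcc
          -- value along the curve
          have hval : ∀ s : ℝ, (V ∘ c) s - (V ∘ c) 0
              = a ^ 4 * s ^ 2 * ((1 + η / 2) * s ^ 2 - 2 * η) := by
            intro s
            have hup : ∀ s : ℝ, Function.update x i (a + s * b) j = b := by
              intro s; rw [Function.update_of_ne hji]
            have h2s : ∀ s : ℝ, ∑ k, (c s k) ^ 2
                = T - a ^ 2 - b ^ 2 + (a + s * b) ^ 2 + (b - s * a) ^ 2 := by
              intro s
              rw [hc]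
              simp only []
              rw [sum_upd, sum_upd, hup]
              ring
            have h4s : ∀ s : ℝ, ∑ k, (c s k) ^ 4
                = (∑ k, (x k) ^ 4) - a ^ 4 - b ^ 4 + (a + s * b) ^ 4 + (b - s * a) ^ 4 := by
              intro s
              rw [hc]
              simp only []
              rw [sum_upd, sum_upd, hup]
              ring
            rw [Function.comp_apply, Function.comp_apply, key, key, h2s, h4s, h2s, h4s]
            linear_combination (η * a ^ 2 * s ^ 2 / 2
                + (1 + η) / 4 * (4 * a ^ 2 * s ^ 4 + s ^ 4 * (b ^ 2 - a ^ 2))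
                + η * s * a * b - 3 * η * s ^ 2 * a ^ 2 - η * s ^ 3 * a * b
                - η / 2 * s ^ 4 * a ^ 2 - η / 4 * s ^ 4 * (b ^ 2 - a ^ 2)) * htb
              + (s ^ 2 * (a ^ 2 + b ^ 2) / 2) * hTt
          -- pick a small s contradicting the local min
          rw [IsLocalMin, IsMinFilter, Metric.eventually_nhds_iff] at hmin'
          obtain ⟨ε, hε, hball⟩ := hmin'
          set s := min (ε / 2) (η / (1 + η)) with hs
          have hs0 : 0 < s := by
            apply lt_min (by linarith)
            positivity
          have hsε : dist s 0 < ε := by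
            rw [Real.dist_eq, sub_zero, abs_of_pos hs0]
            calc s ≤ ε / 2 := min_le_left _ _
              _ < ε := by linarith
          have hsmall : (1 + η / 2) * s ^ 2 - 2 * η < 0 := by
            have h1 : s ≤ η / (1 + η) := min_le_right _ _
            have h2 : s * (1 + η) ≤ η := by
              rw [← le_div_iff₀ (by linarith)]; exact h1
            nlinarith
          have := hball hsε
          have hneg : (V ∘ c) s - (V ∘ c) 0 < 0 := by
            rw [hval s]
            have h0 : 0 < a ^ 4 * s ^ 2 := by positivity
            nlinarith
          linarith
      · -- all coordinates zero: contradiction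
        push_neg at hex
        exfalso
        have hx0 : x = 0 := funext fun i => hex i
        obtain ⟨i⟩ : Nonempty (Fin n) := ⟨⟨0, hn⟩⟩
        have hco : ContinuousAt (fun s : ℝ => Function.update x i s) (x i) := by
          exact (Continuous.update continuous_const i continuous_id).continuousAt
        have hmin' : IsLocalMin (V ∘ fun s : ℝ => Function.update x i s) (x i) := by
          have : Function.update x i (x i) = x := Function.update_eq_self i x
          exact (this ▸ hmin).comp_continuous hco
        have hxi : x i = 0 := hex i
        rw [hxi] at hmin'
        have hT0 : ∑ k, (x k) ^ 2 = 0 := by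
          rw [hx0]; simp
        have hF0 : ∑ k, (x k) ^ 4 = 0 := by
          rw [hx0]; simp
        have hval : ∀ s : ℝ, (V ∘ fun s : ℝ => Function.update x i s) s
            = -(s ^ 2) / 2 + (1 + η) * s ^ 4 / 4 - η * s ^ 4 / 4 := by
          intro s
          simp only [Function.comp_apply, key, sum_upd, hT0, hF0, hxi]
          ring
        rw [IsLocalMin, IsMinFilter, Metric.eventually_nhds_iff] at hmin'
        obtain ⟨ε, hε, hball⟩ := hmin'
        set s := min (ε / 2) 1 with hs
        have hs0 : 0 < s := lt_min (by linarith) one_pos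
        have hs1 : s ≤ 1 := min_le_right _ _
        have hsε : dist s 0 < ε := by
          rw [Real.dist_eq, sub_zero, abs_of_pos hs0]
          calc s ≤ ε / 2 := min_le_left _ _
            _ < ε := by linarith
        have := hball hsε
        rw [hval s, hval 0] at this
        have h4le : s ^ 4 ≤ s ^ 2 := by
          have hh : 0 ≤ s ^ 2 * ((1 - s) * (1 + s)) :=
            mul_nonneg (sq_nonneg s) (mul_nonneg (by linarith) (by linarith))
          nlinarith [hh]
        have hsp : 0 < s ^ 2 := by positivity
        nlinarith
    · -- backward: ±e_i is a (global, hence local) min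
      rintro ⟨i, hi, hk⟩
      have hvx : V x = -1/4 := val x i hi hk
      exact Filter.Eventually.of_forall fun y => hvx ▸ lower y
  · intro i
    constructor
    · refine val _ i (Or.inl ?_) (fun k hki => ?_)
      · simp
      · exact Pi.single_eq_of_ne hki _
    · refine val _ i (Or.inr ?_) (fun k hki => ?_)
      · simp
      · exact Pi.single_eq_of_ne hki _
end

section
/- For the Kirk–Silber realization with 0 < ε < 1 and η > 0, on the invariant subspace Ω₂ = {(0,0,x₃,x₄)} the ω-limit set of every initial condition with x₃x₄ ≠ 0 and max(|x₃|,|x₄|) ≠ min(|x₃|,|x₄|) is one of the four sinks (±1,0), (0,±1); initial conditions on the diagonals x₃² = x₄² (excluding the origin) converge to one of the saddles ζ with x₃² = x₄² = 1/(2+η). -/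
set_option maxHeartbeats 1000000
open Filter

/-- Linear ODE representation: solutions of `x' = a·x` are `x 0 · exp(∫a)`. -/
lemma lin_rep (a x : ℝ → ℝ) (ha : Continuous a)
    (hx : ∀ t, HasDerivAt x (a t * x t) t) :
    ∀ t, x t = x 0 * Real.exp (∫ s in (0:ℝ)..t, a s) := by
  intro t
  set A : ℝ → ℝ := fun t => ∫ s in (0:ℝ)..t, a s with hAdef
  have hA : ∀ t, HasDerivAt A (a t) t := fun t =>
    intervalIntegral.integral_hasDerivAt_right (ha.intervalIntegrable _ _)
      ha.aestronglyMeasurable.stronglyMeasurableAtFilter ha.continuousAt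
  have hg : ∀ s, HasDerivAt (fun τ => x τ * Real.exp (-A τ)) 0 s := by
    intro s
    have h1 : HasDerivAt (fun τ => Real.exp (-A τ)) (Real.exp (-A s) * (-a s)) s :=
      ((hA s).neg).exp
    have := (hx s).mul h1
    refine this.congr_deriv ?_
    ring
  have hconst : x t * Real.exp (-A t) = x 0 * Real.exp (-A 0) :=
    is_const_of_deriv_eq_zero (fun s => (hg s).differentiableAt)
      (fun s => (hg s).deriv) t 0
  have hA0 : A 0 = 0 := intervalIntegral.integral_same
  rw [hA0, neg_zero, Real.exp_zero, mul_one] at hconst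
  have : x t * Real.exp (-A t) * Real.exp (A t) = x 0 * Real.exp (A t) := by rw [hconst]
  rwa [mul_assoc, ← Real.exp_add, neg_add_cancel, Real.exp_zero, mul_one] at this

lemma sign_pres (a x : ℝ → ℝ) (ha : Continuous a)
    (hx : ∀ t, HasDerivAt x (a t * x t) t) (h0 : x 0 ≠ 0) : ∀ t, 0 < x 0 * x t := by
  intro t
  rw [lin_rep a x ha hx t]
  have h1 := Real.exp_pos (∫ s in (0:ℝ)..t, a s)
  have h2 : 0 < x 0 ^ 2 := pow_two_pos_of_ne_zero h0
  nlinarith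

lemma zero_pres (a x : ℝ → ℝ) (ha : Continuous a)
    (hx : ∀ t, HasDerivAt x (a t * x t) t) (h0 : x 0 = 0) : ∀ t, x t = 0 := by
  intro t
  rw [lin_rep a x ha hx t, h0, zero_mul]
open Filter

/-- Upper barrier: if `f' ≤ 0` whenever `f ≥ M` (for `t ≥ T`), then `f ≤ M` on `[T,∞)`. -/
lemma barrier_le (f f' : ℝ → ℝ) (hf : ∀ t, HasDerivAt f (f' t) t) (T M : ℝ)
    (hT : f T ≤ M) (H : ∀ t, T ≤ t → M ≤ f t → f' t ≤ 0) :
    ∀ t, T ≤ t → f t ≤ M := by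
  have hfc : Continuous f := Differentiable.continuous (fun t => (hf t).differentiableAt)
  intro t₁ ht₁
  by_contra hc
  push_neg at hc
  set S : Set ℝ := Set.Icc T t₁ ∩ {t | f t ≤ M} with hS
  have hTS : T ∈ S := ⟨⟨le_refl _, ht₁⟩, hT⟩
  have hne : S.Nonempty := ⟨T, hTS⟩
  have hbdd : BddAbove S := ⟨t₁, fun s hs => hs.1.2⟩
  have hcl : IsClosed S := isClosed_Icc.inter (isClosed_le hfc continuous_const)
  set t₀ := sSup S with ht₀
  have ht₀S : t₀ ∈ S := hcl.csSup_mem hne hbdd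
  have ht₀T : T ≤ t₀ := ht₀S.1.1
  have ht₀1 : t₀ ≤ t₁ := ht₀S.1.2
  have hfM : f t₀ ≤ M := ht₀S.2
  have hlt : t₀ < t₁ := lt_of_le_of_ne ht₀1 (fun h => absurd (h ▸ hfM) (not_le.mpr hc))
  have hgt : ∀ s, t₀ < s → s ≤ t₁ → M < f s := by
    intro s hs hs1
    by_contra hsM
    push_neg at hsM
    exact absurd (le_csSup hbdd ⟨⟨le_trans ht₀T hs.le, hs1⟩, hsM⟩) (not_le.mpr hs)
  have hanti : AntitoneOn f (Set.Icc t₀ t₁) := by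
    apply antitoneOn_of_deriv_nonpos (convex_Icc t₀ t₁) hfc.continuousOn
    · intro s hs
      exact (hf s).differentiableAt.differentiableWithinAt
    · intro s hs
      rw [interior_Icc] at hs
      rw [(hf s).deriv]
      exact H s (le_trans ht₀T hs.1.le) (hgt s hs.1 hs.2.le).le
  have := hanti ⟨le_refl _, hlt.le⟩ ⟨hlt.le, le_refl _⟩ hlt.le
  exact absurd (le_trans this hfM) (not_le.mpr hc)

/-- Lower barrier. -/
lemma barrier_ge (f f' : ℝ → ℝ) (hf : ∀ t, HasDerivAt f (f' t) t) (T M : ℝ)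
    (hT : M ≤ f T) (H : ∀ t, T ≤ t → f t ≤ M → 0 ≤ f' t) :
    ∀ t, T ≤ t → M ≤ f t := by
  have := barrier_le (fun t => -f t) (fun t => -f' t) (fun t => (hf t).neg) T (-M)
    (by simpa using hT) (fun t ht hM => by simpa using H t ht (by simpa using hM))
  intro t ht
  simpa using this t ht

/-- Linear decay: if `f' ≤ -δ` on `[T,∞)` then `f t ≤ f T - δ(t-T)`. -/
lemma decay_le (f f' : ℝ → ℝ) (hf : ∀ t, HasDerivAt f (f' t) t) (T δ : ℝ)
    (H : ∀ t, T ≤ t → f' t ≤ -δ) :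
    ∀ t, T ≤ t → f t ≤ f T - δ * (t - T) := by
  intro t ht
  have hanti : AntitoneOn (fun s => f s + δ * s) (Set.Ici T) := by
    apply antitoneOn_of_deriv_nonpos (convex_Ici T)
    · exact ((Differentiable.continuous (fun s => (hf s).differentiableAt)).add
        (continuous_const.mul continuous_id)).continuousOn
    · intro s hs
      exact ((hf s).add ((hasDerivAt_id s).const_mul δ)).differentiableAt.differentiableWithinAt
    · intro s hs
      rw [interior_Ici] at hs
      have hd : HasDerivAt (fun s => f s + δ * s) (f' s + δ) s := by
        exact ((hf s).add ((hasDerivAt_id s).const_mul δ)).congr_deriv (by ring)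
      rw [hd.deriv]
      have := H s hs.le
      linarith
  have := hanti (Set.self_mem_Ici) (Set.mem_Ici.mpr ht) ht
  simp only at this
  linarith

/-- Escape: if `f' ≤ -δ < 0` whenever `f ≥ M` (on `[T,∞)`) and `f` is bounded below,
then eventually `f ≤ M`. -/
lemma escape_le (f f' : ℝ → ℝ) (hf : ∀ t, HasDerivAt f (f' t) t) (T M B δ : ℝ)
    (hδ : 0 < δ) (hB : ∀ t, T ≤ t → B ≤ f t)
    (H : ∀ t, T ≤ t → M ≤ f t → f' t ≤ -δ) :
    ∃ T', T ≤ T' ∧ ∀ t, T' ≤ t → f t ≤ M := by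
  have hex : ∃ t₁, T ≤ t₁ ∧ f t₁ ≤ M := by
    by_contra hc
    push_neg at hc
    have hd : ∀ t, T ≤ t → f' t ≤ -δ := fun t ht => H t ht (hc t ht).le
    have := decay_le f f' hf T δ hd
    set t := T + (f T - B) / δ + 1 with httt
    have hd0 : 0 ≤ (f T - B) / δ := div_nonneg (sub_nonneg.mpr (hB T le_rfl)) hδ.le
    have ht : T ≤ t := by rw [httt]; linarith
    have h1 := this t ht
    have h2 := hB t ht
    have h3 : δ * (t - T) = (f T - B) + δ := by
      rw [httt]
      field_simp
      ring
    linarith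
  obtain ⟨t₁, ht₁, hft₁⟩ := hex
  refine ⟨t₁, ht₁, barrier_le f f' hf t₁ M hft₁ ?_⟩
  intro t ht hM
  exact le_trans (H t (le_trans ht₁ ht) hM) (by linarith)

/-- Escape (lower). -/
lemma escape_ge (f f' : ℝ → ℝ) (hf : ∀ t, HasDerivAt f (f' t) t) (T M B δ : ℝ)
    (hδ : 0 < δ) (hB : ∀ t, T ≤ t → f t ≤ B)
    (H : ∀ t, T ≤ t → f t ≤ M → δ ≤ f' t) :
    ∃ T', T ≤ T' ∧ ∀ t, T' ≤ t → M ≤ f t := by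
  obtain ⟨T', hT', h⟩ := escape_le (fun t => -f t) (fun t => -f' t) (fun t => (hf t).neg)
    T (-M) (-B) δ hδ (fun t ht => by simpa using hB t ht)
    (fun t ht hM => by simpa using H t ht (by simpa using hM))
  exact ⟨T', hT', fun t ht => by simpa using h t ht⟩

section System

variable {η : ℝ} {x y : ℝ → ℝ}

/-- The off-diagonal case: if `y 0 ^ 2 < x 0 ^ 2` and `y 0 ≠ 0`, then `x → ±1`, `y → 0`. -/
lemma off_diag (hη : 0 < η)
    (hx : ∀ t, HasDerivAt x (x t * (1 - x t ^ 2 - (1 + η) * y t ^ 2)) t)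
    (hy : ∀ t, HasDerivAt y (y t * (1 - y t ^ 2 - (1 + η) * x t ^ 2)) t)
    (hy0 : y 0 ≠ 0) (hlt : y 0 ^ 2 < x 0 ^ 2) :
    ∃ e : ℝ, e ^ 2 = 1 ∧ Tendsto x atTop (nhds e) ∧ Tendsto y atTop (nhds 0) := by
  have cx : Continuous x := Differentiable.continuous (fun t => (hx t).differentiableAt)
  have cy : Continuous y := Differentiable.continuous (fun t => (hy t).differentiableAt)
  set u : ℝ → ℝ := fun t => x t ^ 2 with hu_def
  set v : ℝ → ℝ := fun t => y t ^ 2 with hv_def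
  have cu : Continuous u := by fun_prop
  have cv : Continuous v := by fun_prop
  have hu : ∀ t, HasDerivAt u (2 * u t * (1 - u t - (1 + η) * v t)) t := by
    intro t
    have := (hx t).pow 2
    refine this.congr_deriv ?_
    simp [hu_def, hv_def]
    ring
  have hv : ∀ t, HasDerivAt v (2 * v t * (1 - v t - (1 + η) * u t)) t := by
    intro t
    have := (hy t).pow 2
    refine this.congr_deriv ?_
    simp [hu_def, hv_def]
    ring
  -- positivity of u, v for all time
  have hx0 : x 0 ≠ 0 := by
    intro h
    rw [h] at hlt
    nlinarith [sq_nonneg (y 0)]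
  have hax : Continuous (fun t => 1 - x t ^ 2 - (1 + η) * y t ^ 2) := by fun_prop
  have hay : Continuous (fun t => 1 - y t ^ 2 - (1 + η) * x t ^ 2) := by fun_prop
  have hxs : ∀ t, 0 < x 0 * x t :=
    sign_pres _ x hax (fun t => by simpa [mul_comm] using hx t) hx0
  have hys : ∀ t, 0 < y 0 * y t :=
    sign_pres _ y hay (fun t => by simpa [mul_comm] using hy t) hy0
  have upos : ∀ t, 0 < u t := by
    intro t
    have := hxs t
    have hxt : x t ≠ 0 := by rintro h; rw [h, mul_zero] at this; exact lt_irrefl 0 this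
    exact pow_two_pos_of_ne_zero hxt
  have vpos : ∀ t, 0 < v t := by
    intro t
    have := hys t
    have hyt : y t ≠ 0 := by rintro h; rw [h, mul_zero] at this; exact lt_irrefl 0 this
    exact pow_two_pos_of_ne_zero hyt
  -- u - v stays positive
  have hD : ∀ t, HasDerivAt (fun t => u t - v t)
      ((2 * (1 - u t - v t)) * (u t - v t)) t := by
    intro t
    have := (hu t).sub (hv t)
    refine this.congr_deriv ?_
    ring
  have hD0 : u 0 - v 0 ≠ 0 := by simp only [hu_def, hv_def]; intro h; nlinarith
  have hDs : ∀ t, 0 < (u 0 - v 0) * (u t - v t) :=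
    sign_pres _ _ (by fun_prop) hD hD0
  have hDpos : ∀ t, 0 < u t - v t := by
    intro t
    have h0 : 0 < u 0 - v 0 := by simp only [hu_def, hv_def]; nlinarith
    nlinarith [hDs t]
  -- bounds on s = u + v
  set s : ℝ → ℝ := fun t => u t + v t with hs_def
  have hs : ∀ t, HasDerivAt s
      (2 * u t * (1 - u t - (1 + η) * v t) + 2 * v t * (1 - v t - (1 + η) * u t)) t :=
    fun t => (hu t).add (hv t)
  set Ms : ℝ := max (s 0) 1 with hMs_def
  have hMs1 : (1:ℝ) ≤ Ms := le_max_right _ _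
  have hsub : ∀ t, 0 ≤ t → s t ≤ Ms := by
    apply barrier_le s _ hs 0 Ms (le_max_left _ _)
    intro t _ hM
    have h1 : 1 ≤ u t + v t := le_trans hMs1 hM
    nlinarith [upos t, vpos t, mul_pos (upos t) (vpos t),
      mul_nonneg (sub_nonneg.mpr h1) (by linarith [upos t, vpos t] : (0:ℝ) ≤ u t + v t),
      mul_nonneg hη.le (mul_pos (upos t) (vpos t)).le]
  set ms : ℝ := min (s 0) (1 / (2 + η)) with hms_def
  have hmspos : 0 < ms := by
    apply lt_min
    · have := upos 0; have := vpos 0; simp only [hs_def]; linarith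
    · positivity
  have hslb : ∀ t, 0 ≤ t → ms ≤ s t := by
    apply barrier_ge s _ hs 0 ms (min_le_left _ _)
    intro t _ hM
    have h1 : (2 + η) * (u t + v t) ≤ 1 := by
      have h2 : s t ≤ 1 / (2 + η) := le_trans hM (min_le_right _ _)
      rw [le_div_iff₀ (by linarith : (0:ℝ) < 2 + η)] at h2
      have h3 : u t + v t = s t := rfl
      rw [h3]
      linarith [h2]
    have hspos : (0:ℝ) < u t + v t := by linarith [upos t, vpos t]
    nlinarith [upos t, vpos t, mul_pos (upos t) (vpos t), sq_nonneg (u t - v t),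
      mul_nonneg hspos.le (sub_nonneg.mpr h1),
      mul_nonneg hη.le (sq_nonneg (u t - v t))]
  have hulb : ∀ t, 0 ≤ t → ms / 2 ≤ u t := by
    intro t ht
    have := hslb t ht
    have := hDpos t
    simp only [hs_def] at *
    linarith
  have huub : ∀ t, 0 ≤ t → u t ≤ Ms := by
    intro t ht
    have := hsub t ht
    have := vpos t
    simp only [hs_def] at *
    linarith
  -- the ratio v/u decays: L = log v - log u has L' = -2η(u - v) < 0
  set L : ℝ → ℝ := fun t => Real.log (v t) - Real.log (u t) with hL_def
  have hL : ∀ t, HasDerivAt L (-(2 * η) * (u t - v t)) t := by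
    intro t
    have h1 : HasDerivAt (fun t => Real.log (v t)) ((v t)⁻¹ * (2 * v t * (1 - v t - (1 + η) * u t))) t :=
      (Real.hasDerivAt_log (ne_of_gt (vpos t))).comp t (hv t)
    have h2 : HasDerivAt (fun t => Real.log (u t)) ((u t)⁻¹ * (2 * u t * (1 - u t - (1 + η) * v t))) t :=
      (Real.hasDerivAt_log (ne_of_gt (upos t))).comp t (hu t)
    have h3 := h1.sub h2
    refine h3.congr_deriv ?_
    have hune := ne_of_gt (upos t)
    have hvne := ne_of_gt (vpos t)
    field_simp
    ring
  set r0 : ℝ := v 0 / u 0 with hr0_def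
  have hr0lt : r0 < 1 := by
    rw [hr0_def, div_lt_one (upos 0)]
    exact hDpos 0 |> fun h => by linarith
  have hr0pos : 0 < r0 := div_pos (vpos 0) (upos 0)
  have hLle : ∀ t, 0 ≤ t → L t ≤ L 0 := by
    apply barrier_le L _ hL 0 (L 0) le_rfl
    intro t _ _
    have := hDpos t
    nlinarith
  have hrle : ∀ t, 0 ≤ t → v t / u t ≤ r0 := by
    intro t ht
    have h1 := hLle t ht
    have h2 : Real.exp (L t) ≤ Real.exp (L 0) := Real.exp_le_exp.mpr h1
    have h3 : ∀ τ, Real.exp (L τ) = v τ / u τ := by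
      intro τ
      rw [hL_def]
      rw [Real.exp_sub, Real.exp_log (vpos τ), Real.exp_log (upos τ)]
    rw [h3, h3] at h2
    exact h2
  set δD : ℝ := (ms / 2) * (1 - r0) with hδD_def
  have hδDpos : 0 < δD := by
    apply mul_pos (by linarith) (by linarith)
  have hDlb : ∀ t, 0 ≤ t → δD ≤ u t - v t := by
    intro t ht
    have h1 : v t ≤ r0 * u t := by
      have := hrle t ht
      rw [div_le_iff₀ (upos t)] at this
      linarith
    have h2 := hulb t ht
    nlinarith
  -- hence L decays linearly and v → 0
  have hLdecay : ∀ t, 0 ≤ t → L t ≤ L 0 - (2 * η * δD) * (t - 0) :=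
    decay_le L _ hL 0 (2 * η * δD) (fun t ht => by
      have := hDlb t ht
      nlinarith)
  have hvbound : ∀ t, 0 ≤ t → v t ≤ Ms * Real.exp (L 0 - (2 * η * δD) * t) := by
    intro t ht
    have h3 : Real.exp (L t) = v t / u t := by
      rw [hL_def, Real.exp_sub, Real.exp_log (vpos t), Real.exp_log (upos t)]
    have h4 : v t = u t * Real.exp (L t) := by
      rw [h3, mul_div_assoc', mul_comm, mul_div_assoc, div_self (ne_of_gt (upos t)), mul_one]
    rw [h4]
    have h5 : Real.exp (L t) ≤ Real.exp (L 0 - (2 * η * δD) * t) :=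
      Real.exp_le_exp.mpr (by have := hLdecay t ht; linarith)
    have h6 := huub t ht
    have h7 := Real.exp_pos (L t)
    nlinarith [Real.exp_pos (L 0 - (2 * η * δD) * t)]
  have hrhstend : Tendsto (fun t : ℝ => Ms * Real.exp (L 0 - (2 * η * δD) * t)) atTop (nhds 0) := by
    have h1 : Tendsto (fun t : ℝ => L 0 - (2 * η * δD) * t) atTop atBot := by
      apply tendsto_atBot_add_const_left
      apply tendsto_neg_atBot_iff.mpr
      exact Tendsto.const_mul_atTop (by positivity) tendsto_id
    have h2 := Real.tendsto_exp_atBot.comp h1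
    have h3 := h2.const_mul Ms
    simpa using h3
  have hvtend : Tendsto v atTop (nhds 0) := by
    apply tendsto_of_tendsto_of_tendsto_of_le_of_le' tendsto_const_nhds hrhstend
    · exact Eventually.of_forall (fun t => (vpos t).le)
    · filter_upwards [eventually_ge_atTop (0:ℝ)] with t ht
      exact hvbound t ht
  -- u → 1
  have hutend : Tendsto u atTop (nhds 1) := by
    rw [Metric.tendsto_atTop]
    intro ε hε
    set ε₁ : ℝ := ε / (4 * (1 + η)) with hε₁_def
    have hε₁pos : 0 < ε₁ := by positivity
    obtain ⟨N, hN⟩ := Metric.tendsto_atTop.mp hvtend ε₁ hε₁pos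
    set T₀ : ℝ := max N 0 with hT₀_def
    have hvsmall : ∀ t, T₀ ≤ t → v t ≤ ε₁ := by
      intro t ht
      have h1 := hN t (le_trans (le_max_left _ _) ht)
      rw [Real.dist_eq, abs_sub_comm, abs_sub_lt_iff] at h1
      linarith [h1.2]
    have hT₀0 : (0:ℝ) ≤ T₀ := le_max_right _ _
    -- eventually u ≤ 1 + ε/2
    obtain ⟨T₁, hT₁ge, hT₁⟩ := escape_le u _ hu T₀ (1 + ε / 2) 0 ε hε
      (fun t ht => (upos t).le)
      (by
        intro t ht hM
        have hv0 := vpos t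
        have hu0 := upos t
        have k1 : 0 ≤ u t * ((1 + η) * v t) := by positivity
        have k2 : 0 ≤ (u t - 1 - ε / 2) * u t :=
          mul_nonneg (by linarith) hu0.le
        have k3 : 0 ≤ ε * (u t - 1 - ε / 2) := mul_nonneg hε.le (by linarith)
        nlinarith [sq_nonneg ε])
    -- eventually u ≥ 1 - ε/2
    obtain ⟨T₂, hT₂ge, hT₂⟩ := escape_ge u _ hu T₀ (1 - ε / 2) Ms (ms * ε / 4)
      (by positivity)
      (fun t ht => huub t (le_trans hT₀0 ht))
      (by
        intro t ht hM
        have h1 := hvsmall t ht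
        have h2 := hulb t (le_trans hT₀0 ht)
        have h3 : (1 + η) * v t ≤ ε / 4 := by
          have h4 : (1 + η) * v t ≤ (1 + η) * ε₁ := by nlinarith [vpos t]
          have h5 : (1 + η) * ε₁ = ε / 4 := by
            rw [hε₁_def]
            field_simp
          linarith
        have k1 : 0 ≤ (u t - ms / 2) * (1 - u t - (1 + η) * v t) :=
          mul_nonneg (by linarith) (by linarith)
        have k2 : 0 ≤ ms * (1 - u t - (1 + η) * v t - ε / 4) := by
          apply mul_nonneg hmspos.le
          linarith
        nlinarith)
    refine ⟨max T₁ T₂, fun t ht => ?_⟩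
    have h1 := hT₁ t (le_trans (le_max_left _ _) ht)
    have h2 := hT₂ t (le_trans (le_max_right _ _) ht)
    rw [Real.dist_eq, abs_sub_lt_iff]
    constructor <;> linarith
  -- conclude for x and y
  set e : ℝ := if 0 < x 0 then 1 else -1 with he_def
  have he2 : e ^ 2 = 1 := by
    rw [he_def]
    split_ifs <;> norm_num
  have hxe : ∀ t, x t = e * Real.sqrt (u t) := by
    intro t
    have hsq : Real.sqrt (u t) = |x t| := Real.sqrt_sq_eq_abs (x t)
    rw [he_def]
    rcases lt_or_gt_of_ne hx0 with h | h
    · have hxt : x t < 0 := by nlinarith [hxs t]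
      rw [if_neg (by linarith), hsq, abs_of_neg hxt]
      ring
    · have hxt : 0 < x t := by nlinarith [hxs t]
      rw [if_pos h, hsq, abs_of_pos hxt, one_mul]
  have hsqrtu : Tendsto (fun t => Real.sqrt (u t)) atTop (nhds 1) := by
    have h1 : Tendsto (fun t => Real.sqrt (u t)) atTop (nhds (Real.sqrt 1)) :=
      (Real.continuous_sqrt.continuousAt.tendsto).comp hutend
    simpa [Real.sqrt_one] using h1
  have hxtend : Tendsto x atTop (nhds e) := by
    have h1 := hsqrtu.const_mul e
    rw [mul_one] at h1
    convert h1 using 1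
    exact funext hxe
  have hsqrtv : Tendsto (fun t => Real.sqrt (v t)) atTop (nhds 0) := by
    have h1 : Tendsto (fun t => Real.sqrt (v t)) atTop (nhds (Real.sqrt 0)) :=
      (Real.continuous_sqrt.continuousAt.tendsto).comp hvtend
    simpa [Real.sqrt_zero] using h1
  have hytend : Tendsto y atTop (nhds 0) := by
    apply tendsto_of_tendsto_of_tendsto_of_le_of_le' (by simpa using hsqrtv.neg) hsqrtv
    · apply Eventually.of_forall
      intro t
      have : Real.sqrt (v t) = |y t| := Real.sqrt_sq_eq_abs (y t)
      rw [this]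
      exact neg_abs_le (y t)
    · apply Eventually.of_forall
      intro t
      have : Real.sqrt (v t) = |y t| := Real.sqrt_sq_eq_abs (y t)
      rw [this]
      exact le_abs_self (y t)
  exact ⟨e, he2, hxtend, hytend⟩

/-- The diagonal case: `x 0 ^ 2 = y 0 ^ 2 ≠ 0` implies convergence to a saddle. -/
lemma diag (hη : 0 < η)
    (hx : ∀ t, HasDerivAt x (x t * (1 - x t ^ 2 - (1 + η) * y t ^ 2)) t)
    (hy : ∀ t, HasDerivAt y (y t * (1 - y t ^ 2 - (1 + η) * x t ^ 2)) t)
    (hx0 : x 0 ≠ 0) (heq : x 0 ^ 2 = y 0 ^ 2) :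
    ∃ p : ℝ × ℝ, p.1 ^ 2 = 1 / (2 + η) ∧ p.2 ^ 2 = 1 / (2 + η) ∧
      Tendsto (fun t => (x t, y t)) atTop (nhds p) := by
  have cx : Continuous x := Differentiable.continuous (fun t => (hx t).differentiableAt)
  have cy : Continuous y := Differentiable.continuous (fun t => (hy t).differentiableAt)
  set u : ℝ → ℝ := fun t => x t ^ 2 with hu_def
  set v : ℝ → ℝ := fun t => y t ^ 2 with hv_def
  have hu : ∀ t, HasDerivAt u (2 * u t * (1 - u t - (1 + η) * v t)) t := by
    intro t
    have := (hx t).pow 2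
    refine this.congr_deriv ?_
    simp [hu_def, hv_def]
    ring
  have hv : ∀ t, HasDerivAt v (2 * v t * (1 - v t - (1 + η) * u t)) t := by
    intro t
    have := (hy t).pow 2
    refine this.congr_deriv ?_
    simp [hu_def, hv_def]
    ring
  have hy0 : y 0 ≠ 0 := by
    intro h
    rw [h] at heq
    apply hx0
    have : x 0 ^ 2 = 0 := by simpa using heq
    exact pow_eq_zero_iff (two_ne_zero) |>.mp this
  have hax : Continuous (fun t => 1 - x t ^ 2 - (1 + η) * y t ^ 2) := by fun_prop
  have hay : Continuous (fun t => 1 - y t ^ 2 - (1 + η) * x t ^ 2) := by fun_prop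
  have hxs : ∀ t, 0 < x 0 * x t :=
    sign_pres _ x hax (fun t => by simpa [mul_comm] using hx t) hx0
  have hys : ∀ t, 0 < y 0 * y t :=
    sign_pres _ y hay (fun t => by simpa [mul_comm] using hy t) hy0
  have upos : ∀ t, 0 < u t := by
    intro t
    have := hxs t
    have hxt : x t ≠ 0 := by rintro h; rw [h, mul_zero] at this; exact lt_irrefl 0 this
    exact pow_two_pos_of_ne_zero hxt
  -- v ≡ u on the diagonal
  have hD : ∀ t, HasDerivAt (fun t => u t - v t)
      ((2 * (1 - u t - v t)) * (u t - v t)) t := by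
    intro t
    have := (hu t).sub (hv t)
    refine this.congr_deriv ?_
    ring
  have hveq : ∀ t, v t = u t := by
    intro t
    have h0 : u 0 - v 0 = 0 := by simp only [hu_def, hv_def]; rw [heq]; ring
    have := zero_pres _ _ (by fun_prop) hD h0 t
    linarith [this]
  have hu' : ∀ t, HasDerivAt u (2 * u t * (1 - (2 + η) * u t)) t := by
    intro t
    convert hu t using 1
    rw [hveq t]
    ring
  set c : ℝ := 1 / (2 + η) with hc_def
  have hcpos : 0 < c := by positivity
  have key : (2 + η) * c = 1 := by
    rw [hc_def]
    field_simp
  -- barriers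
  set m₀ : ℝ := min (u 0) c with hm₀_def
  have hm₀pos : 0 < m₀ := lt_min (upos 0) hcpos
  have hulb : ∀ t, 0 ≤ t → m₀ ≤ u t := by
    apply barrier_ge u _ hu' 0 m₀ (min_le_left _ _)
    intro t _ hM
    have huc : u t ≤ c := le_trans hM (min_le_right _ _)
    have h1 : (2 + η) * u t ≤ 1 := by nlinarith
    have := upos t
    nlinarith
  set M₀ : ℝ := max (u 0) c with hM₀_def
  have huub : ∀ t, 0 ≤ t → u t ≤ M₀ := by
    apply barrier_le u _ hu' 0 M₀ (le_max_left _ _)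
    intro t _ hM
    have huc : c ≤ u t := le_trans (le_max_right _ _) hM
    have h1 : 1 ≤ (2 + η) * u t := by nlinarith
    have := upos t
    nlinarith
  -- u → c
  have hutend : Tendsto u atTop (nhds c) := by
    rw [Metric.tendsto_atTop]
    intro ε hε
    obtain ⟨T₁, _, hT₁⟩ := escape_le u _ hu' 0 (c + ε / 2) 0 ((2 + η) * (c * ε))
      (by positivity) (fun t _ => (upos t).le)
      (by
        intro t ht hM
        have hrw : 2 * u t * (1 - (2 + η) * u t) = (2 + η) * (2 * u t * (c - u t)) := by
          have h1 : (1:ℝ) - (2 + η) * u t = (2 + η) * (c - u t) := by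
            rw [mul_sub, key]
          rw [h1]
          ring
        rw [hrw]
        have h2 : 2 * u t * (c - u t) ≤ -(c * ε) := by
          nlinarith [mul_nonneg (by linarith : (0:ℝ) ≤ u t - c - ε / 2)
              (by linarith : (0:ℝ) ≤ u t - c),
            mul_nonneg hcpos.le (by linarith : (0:ℝ) ≤ u t - c - ε / 2),
            mul_nonneg hε.le (by linarith : (0:ℝ) ≤ u t - c - ε / 2), sq_nonneg ε]
        nlinarith [h2, hη])
    obtain ⟨T₂, _, hT₂⟩ := escape_ge u _ hu' 0 (c - ε / 2) M₀ ((2 + η) * (m₀ * ε))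
      (by positivity) (fun t ht => huub t (by linarith))
      (by
        intro t ht hM
        have hrw : 2 * u t * (1 - (2 + η) * u t) = (2 + η) * (2 * u t * (c - u t)) := by
          have h1 : (1:ℝ) - (2 + η) * u t = (2 + η) * (c - u t) := by
            rw [mul_sub, key]
          rw [h1]
          ring
        rw [hrw]
        have h2 : m₀ * ε ≤ 2 * u t * (c - u t) := by
          have h3 := hulb t (by linarith)
          nlinarith [mul_nonneg (by linarith : (0:ℝ) ≤ u t - m₀)
              (by linarith : (0:ℝ) ≤ c - u t - ε / 2),
            mul_nonneg hm₀pos.le (by linarith : (0:ℝ) ≤ c - u t - ε / 2)]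
        nlinarith [h2, hη])
    refine ⟨max T₁ T₂, fun t ht => ?_⟩
    have h1 := hT₁ t (le_trans (le_max_left _ _) ht)
    have h2 := hT₂ t (le_trans (le_max_right _ _) ht)
    rw [Real.dist_eq, abs_sub_lt_iff]
    constructor <;> linarith
  have hvtend : Tendsto v atTop (nhds c) := by
    have : v = u := funext hveq
    rw [this]
    exact hutend
  -- signs and limits of x, y
  set e : ℝ := if 0 < x 0 then 1 else -1 with he_def
  set e' : ℝ := if 0 < y 0 then 1 else -1 with he'_def
  have he2 : e ^ 2 = 1 := by rw [he_def]; split_ifs <;> norm_num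
  have he'2 : e' ^ 2 = 1 := by rw [he'_def]; split_ifs <;> norm_num
  have hxe : ∀ t, x t = e * Real.sqrt (u t) := by
    intro t
    have hsq : Real.sqrt (u t) = |x t| := Real.sqrt_sq_eq_abs (x t)
    rw [he_def]
    rcases lt_or_gt_of_ne hx0 with h | h
    · have hxt : x t < 0 := by nlinarith [hxs t]
      rw [if_neg (by linarith), hsq, abs_of_neg hxt]; ring
    · have hxt : 0 < x t := by nlinarith [hxs t]
      rw [if_pos h, hsq, abs_of_pos hxt, one_mul]
  have hye : ∀ t, y t = e' * Real.sqrt (v t) := by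
    intro t
    have hsq : Real.sqrt (v t) = |y t| := Real.sqrt_sq_eq_abs (y t)
    rw [he'_def]
    rcases lt_or_gt_of_ne hy0 with h | h
    · have hyt : y t < 0 := by nlinarith [hys t]
      rw [if_neg (by linarith), hsq, abs_of_neg hyt]; ring
    · have hyt : 0 < y t := by nlinarith [hys t]
      rw [if_pos h, hsq, abs_of_pos hyt, one_mul]
  have hxtend : Tendsto x atTop (nhds (e * Real.sqrt c)) := by
    have h1 : Tendsto (fun t => Real.sqrt (u t)) atTop (nhds (Real.sqrt c)) :=
      (Real.continuous_sqrt.continuousAt.tendsto).comp hutend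
    have h2 := h1.const_mul e
    convert h2 using 1
    exact funext hxe
  have hytend : Tendsto y atTop (nhds (e' * Real.sqrt c)) := by
    have h1 : Tendsto (fun t => Real.sqrt (v t)) atTop (nhds (Real.sqrt c)) :=
      (Real.continuous_sqrt.continuousAt.tendsto).comp hvtend
    have h2 := h1.const_mul e'
    convert h2 using 1
    exact funext hye
  refine ⟨(e * Real.sqrt c, e' * Real.sqrt c), ?_, ?_, hxtend.prodMk_nhds hytend⟩
  · simp only [mul_pow, he2, one_mul]
    rw [Real.sq_sqrt hcpos.le]
  · simp only [mul_pow, he'2, one_mul]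
    rw [Real.sq_sqrt hcpos.le]

end System

/-- For the Kirk–Silber realization restricted to
`Ω₂ = {(0,0,x₃,x₄)}` (`ẋ₃ = x₃(1 − x₃² − (1+η)x₄²)`,
`ẋ₄ = x₄(1 − x₄² − (1+η)x₃²)`, `η > 0`), every solution with `x₃(0)x₄(0) ≠ 0`
and `x₃(0)² ≠ x₄(0)²` converges to one of the four sinks `(±1,0)`, `(0,±1)`,
while every nonzero solution starting on a diagonal `x₃² = x₄²` converges to one
of the saddles with `x₃² = x₄² = 1/(2+η)`. -/
theorem KS_omega_limits (ε η : ℝ) (hε : 0 < ε) (hε1 : ε < 1) (hη : 0 < η)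
    (x₃ x₄ : ℝ → ℝ)
    (h3 : ∀ t : ℝ, HasDerivAt x₃ (x₃ t * (1 - (x₃ t) ^ 2 - (1 + η) * (x₄ t) ^ 2)) t)
    (h4 : ∀ t : ℝ, HasDerivAt x₄ (x₄ t * (1 - (x₄ t) ^ 2 - (1 + η) * (x₃ t) ^ 2)) t) :
    (x₃ 0 * x₄ 0 ≠ 0 → (x₃ 0) ^ 2 ≠ (x₄ 0) ^ 2 →
      ∃ p : ℝ × ℝ, ((p.1 ^ 2 = 1 ∧ p.2 = 0) ∨ (p.1 = 0 ∧ p.2 ^ 2 = 1)) ∧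
        Tendsto (fun t => (x₃ t, x₄ t)) atTop (nhds p)) ∧
    ((x₃ 0) ^ 2 = (x₄ 0) ^ 2 → (x₃ 0, x₄ 0) ≠ (0, 0) →
      ∃ p : ℝ × ℝ, p.1 ^ 2 = 1 / (2 + η) ∧ p.2 ^ 2 = 1 / (2 + η) ∧
        Tendsto (fun t => (x₃ t, x₄ t)) atTop (nhds p)) := by
  constructor
  · intro hprod hne
    have hx0 : x₃ 0 ≠ 0 := left_ne_zero_of_mul hprod
    have hy0 : x₄ 0 ≠ 0 := right_ne_zero_of_mul hprod
    rcases lt_or_gt_of_ne hne with h | h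
    · obtain ⟨e, he2, hxt, hyt⟩ := off_diag hη h4 h3 hx0 h
      exact ⟨(0, e), Or.inr ⟨rfl, he2⟩, hyt.prodMk_nhds hxt⟩
    · obtain ⟨e, he2, hxt, hyt⟩ := off_diag hη h3 h4 hy0 h
      exact ⟨(e, 0), Or.inl ⟨he2, rfl⟩, hxt.prodMk_nhds hyt⟩
  · intro heq hne
    have hx0 : x₃ 0 ≠ 0 := by
      intro h
      apply hne
      rw [h] at heq
      have h4' : x₄ 0 = 0 := by
        have : x₄ 0 ^ 2 = 0 := by simpa using heq.symm
        exact pow_eq_zero_iff two_ne_zero |>.mp this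
      rw [h, h4']
    exact diag hη h3 h4 hx0 heq
end
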